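/- Let N ≥ 5, set 2** = 2N/(N−4), and let F : ℝ → ℝ be continuously differentiable with F(0) = 0 and such that there exists C > 0 with |F'(s)| ≤ C(|s| + |s|^{2**−1}) for all s ∈ ℝ. Let u₀ ∈ L²(ℝ^N) ∩ L^{2**}(ℝ^N) and let {u_n} be a sequence of measurable functions ℝ^N → ℝ with sup_n (‖u_n‖_2 + ‖u_n‖_{2**}) < ∞ and u_n → u₀ almost everywhere in ℝ^N. Then lim_n ∫_{ℝ^N} (F(u_n) − F(u_n − u₀)) dx = ∫_{ℝ^N} F(u₀) dx. -/

import Mathlib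

open MeasureTheory Real Filter ENNReal NNReal

private lemma bl_pointwise {F : ℝ → ℝ} {C q : ℝ} (hq : 1 ≤ q)
    (hF : ContDiff ℝ 1 F)
    (hF' : ∀ s : ℝ, |deriv F s| ≤ C * (|s| + |s| ^ (q - 1)))
    (a b : ℝ) :
    |F a - F (a - b)| ≤ C * ((|a| + |b|) + (|a| + |b|) ^ (q - 1)) * |b| := by
  set m := |a| + |b| with hm
  have hC : 0 ≤ C := by
    have := (abs_nonneg (deriv F 1)).trans (hF' 1)
    simp [Real.one_rpow] at this
    linarith
  have hmem : ∀ x ∈ Set.uIcc (a - b) a, |x| ≤ m := by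
    intro x hx
    rcases Set.mem_uIcc.1 hx with h | h
    · have h1 : -(|a|+|b|) ≤ a - b := by
        have := abs_le.1 (le_refl |a|) ; cases' abs_le.1 (le_refl |b|) with hb1 hb2
        nlinarith [neg_abs_le a, le_abs_self a, neg_abs_le b, le_abs_self b]
      have h2 : a ≤ |a| + |b| := by nlinarith [le_abs_self a, abs_nonneg b]
      exact abs_le.2 ⟨le_trans h1 h.1, le_trans h.2 h2⟩
    · have h1 : -(|a|+|b|) ≤ a := by nlinarith [neg_abs_le a, abs_nonneg b]
      have h2 : a - b ≤ |a| + |b| := by nlinarith [le_abs_self a, neg_abs_le b, le_abs_self b]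
      exact abs_le.2 ⟨le_trans h1 h.1, le_trans h.2 h2⟩
  have hbound : ∀ x ∈ Set.uIcc (a - b) a, ‖deriv F x‖ ≤ C * (m + m ^ (q - 1)) := by
    intro x hx
    refine (hF' x).trans ?_
    have h1 : |x| ≤ m := hmem x hx
    have h2 : |x| ^ (q - 1) ≤ m ^ (q - 1) :=
      Real.rpow_le_rpow (abs_nonneg x) h1 (by linarith)
    have := add_le_add h1 h2
    nlinarith [this, hC]
  have hderiv : ∀ x ∈ Set.uIcc (a - b) a, DifferentiableAt ℝ F x :=
    fun x _ => (hF.differentiable one_ne_zero).differentiableAt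
  have := Convex.norm_image_sub_le_of_norm_deriv_le hderiv hbound
    (convex_uIcc _ _) (Set.left_mem_uIcc) (Set.right_mem_uIcc)
  calc |F a - F (a - b)| ≤ C * (m + m ^ (q - 1)) * ‖a - (a - b)‖ := this
    _ = C * (m + m ^ (q - 1)) * |b| := by rw [_root_.sub_sub_cancel]; rfl

open Set

private lemma bl_key {α : Type*} [MeasurableSpace α] {μ : Measure α}
    {F : ℝ → ℝ} {C q : ℝ} (hq : 2 ≤ q)
    (hF : ContDiff ℝ 1 F)
    (hF' : ∀ s : ℝ, |deriv F s| ≤ C * (|s| + |s| ^ (q - 1)))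
    {v w : α → ℝ} (hv : AEStronglyMeasurable v μ) (hw : AEStronglyMeasurable w μ)
    {s : Set α} (hs : MeasurableSet s) :
    ∫⁻ x in s, (‖F (v x) - F (v x - w x)‖₊ : ℝ≥0∞) ∂μ ≤
      ENNReal.ofReal C *
        ((eLpNorm v 2 μ + eLpNorm w 2 μ) * eLpNorm (s.indicator w) 2 μ
        + (eLpNorm v (ENNReal.ofReal q) μ + eLpNorm w (ENNReal.ofReal q) μ) ^ (q - 1)
            * eLpNorm (s.indicator w) (ENNReal.ofReal q) μ) := by
  have hq1 : (1:ℝ) < q := by linarith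
  have hq1' : (0:ℝ) ≤ q - 1 := by linarith
  have hq0 : (0:ℝ) < q := by linarith
  set M : α → ℝ≥0∞ := fun x => (‖v x‖₊ : ℝ≥0∞) + (‖w x‖₊ : ℝ≥0∞) with hM
  set W : α → ℝ≥0∞ := s.indicator (fun x => (‖w x‖₊ : ℝ≥0∞)) with hW
  have hMm : AEMeasurable M μ := hv.enorm.add hw.enorm
  have hWm : AEMeasurable W μ := hw.enorm.indicator hs
  have hM1m : AEMeasurable (fun x => M x ^ (q - 1)) μ :=
    ENNReal.continuous_rpow_const.measurable.comp_aemeasurable hMm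
  -- pointwise bound
  have hpt : ∀ x, s.indicator (fun x => (‖F (v x) - F (v x - w x)‖₊ : ℝ≥0∞)) x ≤
      ENNReal.ofReal C * (M x * W x + M x ^ (q - 1) * W x) := by
    intro x
    by_cases hx : x ∈ s
    · rw [Set.indicator_of_mem hx, hW]
      rw [Set.indicator_of_mem hx]
      have h1 := bl_pointwise (le_of_lt hq1) hF hF' (v x) (w x)
      have hC : 0 ≤ C := by
        have := (abs_nonneg (deriv F 1)).trans (hF' 1)
        simp [Real.one_rpow] at this; linarith
      set m : ℝ := |v x| + |w x| with hm
      have hm0 : 0 ≤ m := by positivity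
      calc (‖F (v x) - F (v x - w x)‖₊ : ℝ≥0∞)
          = ENNReal.ofReal |F (v x) - F (v x - w x)| := Real.enorm_eq_ofReal_abs _
        _ ≤ ENNReal.ofReal (C * (m + m ^ (q - 1)) * |w x|) := ENNReal.ofReal_le_ofReal h1
        _ = ENNReal.ofReal C * (ENNReal.ofReal m + ENNReal.ofReal m ^ (q - 1))
              * ENNReal.ofReal |w x| := by
            rw [ENNReal.ofReal_mul (by positivity), ENNReal.ofReal_mul hC,
              ENNReal.ofReal_add hm0 (by positivity),
              ENNReal.ofReal_rpow_of_nonneg hm0 hq1']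
        _ = ENNReal.ofReal C * ((M x + M x ^ (q - 1)) * (‖w x‖₊ : ℝ≥0∞)) := by
            have hMx : ENNReal.ofReal m = M x := by
              rw [hm, ENNReal.ofReal_add (abs_nonneg _) (abs_nonneg _)]
              rw [← Real.enorm_eq_ofReal_abs, ← Real.enorm_eq_ofReal_abs]
              rfl
            rw [hMx, ← Real.enorm_eq_ofReal_abs, mul_assoc]
            rfl
        _ = ENNReal.ofReal C * (M x * (‖w x‖₊:ℝ≥0∞) + M x ^ (q - 1) * (‖w x‖₊:ℝ≥0∞)) := by
            rw [add_mul]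
    · rw [Set.indicator_of_notMem hx]
      exact zero_le
  have hC : 0 ≤ C := by
    have := (abs_nonneg (deriv F 1)).trans (hF' 1)
    simp [Real.one_rpow] at this; linarith
  have hne : q - 1 ≠ 0 := by linarith
  set P : ℝ≥0∞ := ENNReal.ofReal q with hP
  have hP0 : P ≠ 0 := (ENNReal.ofReal_pos.2 hq0).ne'
  have hPt : P ≠ ∞ := ENNReal.ofReal_ne_top
  have hPr : P.toReal = q := ENNReal.toReal_ofReal hq0.le
  have hconj2 : (2:ℝ).HolderConjugate 2 := Real.HolderConjugate.two_two
  have hconjq : (q / (q - 1)).HolderConjugate q := (Real.HolderConjugate.conjExponent hq1).symm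
  have holder1 : ∫⁻ x, M x * W x ∂μ ≤
      (∫⁻ x, M x ^ (2:ℝ) ∂μ) ^ (1/(2:ℝ)) * (∫⁻ x, W x ^ (2:ℝ) ∂μ) ^ (1/(2:ℝ)) := by
    simpa using ENNReal.lintegral_mul_le_Lp_mul_Lq μ hconj2 hMm hWm
  have holder2 : ∫⁻ x, M x ^ (q-1) * W x ∂μ ≤
      (∫⁻ x, M x ^ q ∂μ) ^ ((q-1)/q) * (∫⁻ x, W x ^ q ∂μ) ^ (1/q) := by
    have h := ENNReal.lintegral_mul_le_Lp_mul_Lq μ hconjq hM1m hWm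
    have e1 : (∫⁻ x, (M x ^ (q-1)) ^ (q/(q-1)) ∂μ) = ∫⁻ x, M x ^ q ∂μ :=
      lintegral_congr fun x => by
        rw [← ENNReal.rpow_mul]
        congr 1
        rw [mul_comm, div_mul_cancel₀ _ hne]
    calc ∫⁻ x, M x ^ (q-1) * W x ∂μ
        ≤ (∫⁻ x, (M x ^ (q-1)) ^ (q/(q-1)) ∂μ) ^ (1/(q/(q-1)))
            * (∫⁻ x, W x ^ q ∂μ) ^ (1/q) := by simpa using h
      _ = (∫⁻ x, M x ^ q ∂μ) ^ ((q-1)/q) * (∫⁻ x, W x ^ q ∂μ) ^ (1/q) := by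
          rw [e1, one_div_div]
  have elp2 : ∀ (f : α → ℝ), AEStronglyMeasurable f μ →
      (∫⁻ x, ((‖f x‖₊ : ℝ≥0∞)) ^ (2:ℝ) ∂μ) ^ (1/(2:ℝ)) = eLpNorm f 2 μ := fun f _ => by
    rw [eLpNorm_eq_lintegral_rpow_enorm_toReal two_ne_zero ENNReal.ofNat_ne_top]
    norm_num
    rfl
  have elpq : ∀ (f : α → ℝ), (∫⁻ x, ((‖f x‖₊ : ℝ≥0∞)) ^ q ∂μ) ^ (1/q) = eLpNorm f P μ := fun f => by
    rw [eLpNorm_eq_lintegral_rpow_enorm_toReal hP0 hPt, hPr]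
    rfl
  have hWeq : ∀ x, (‖s.indicator w x‖₊ : ℝ≥0∞) = W x := by
    intro x
    by_cases hx : x ∈ s <;> simp [hW, Set.indicator, hx]
  have hW2 : (∫⁻ x, W x ^ (2:ℝ) ∂μ) ^ (1/(2:ℝ)) = eLpNorm (s.indicator w) 2 μ := by
    rw [← elp2 (s.indicator w) (hw.indicator hs)]
    congr 1
    exact lintegral_congr fun x => by rw [hWeq x]
  have hWq : (∫⁻ x, W x ^ q ∂μ) ^ (1/q) = eLpNorm (s.indicator w) P μ := by
    rw [← elpq (s.indicator w)]
    congr 1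
    exact lintegral_congr fun x => by rw [hWeq x]
  have hMeq : ∀ x, (‖(‖v x‖ + ‖w x‖)‖₊ : ℝ≥0∞) = M x := by
    intro x
    change ‖(‖v x‖ + ‖w x‖)‖ₑ = M x
    rw [← ofReal_norm_eq_enorm, Real.norm_of_nonneg (by positivity),
      ENNReal.ofReal_add (norm_nonneg _) (norm_nonneg _), ofReal_norm_eq_enorm,
      ofReal_norm_eq_enorm]
    rfl
  have hsum : AEStronglyMeasurable (fun x => ‖v x‖ + ‖w x‖) μ := hv.norm.add hw.norm
  have hsum_le2 : eLpNorm (fun x => ‖v x‖ + ‖w x‖) 2 μ ≤ eLpNorm v 2 μ + eLpNorm w 2 μ := by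
    have h := eLpNorm_add_le (p := 2) (μ := μ) hv.norm hw.norm one_le_two
    rw [eLpNorm_norm, eLpNorm_norm] at h
    exact h
  have hsum_leq : eLpNorm (fun x => ‖v x‖ + ‖w x‖) P μ ≤ eLpNorm v P μ + eLpNorm w P μ := by
    have h := eLpNorm_add_le (p := P) (μ := μ) hv.norm hw.norm (ENNReal.one_le_ofReal.2 hq1.le)
    rw [eLpNorm_norm, eLpNorm_norm] at h
    exact h
  have hM2 : (∫⁻ x, M x ^ (2:ℝ) ∂μ) ^ (1/(2:ℝ)) ≤ eLpNorm v 2 μ + eLpNorm w 2 μ := by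
    have e : (∫⁻ x, M x ^ (2:ℝ) ∂μ) ^ (1/(2:ℝ))
        = eLpNorm (fun x => ‖v x‖ + ‖w x‖) 2 μ := by
      rw [← elp2 _ hsum]
      congr 1
      exact lintegral_congr fun x => by rw [hMeq x]
    rw [e]; exact hsum_le2
  have hMq : (∫⁻ x, M x ^ q ∂μ) ^ ((q-1)/q) ≤ (eLpNorm v P μ + eLpNorm w P μ) ^ (q-1) := by
    have e : (∫⁻ x, M x ^ q ∂μ) ^ (1/q) = eLpNorm (fun x => ‖v x‖ + ‖w x‖) P μ := by
      rw [← elpq _]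
      congr 1
      exact lintegral_congr fun x => by rw [hMeq x]
    have h1 : (∫⁻ x, M x ^ q ∂μ) ^ ((q-1)/q) = ((∫⁻ x, M x ^ q ∂μ) ^ (1/q)) ^ (q-1) := by
      rw [← ENNReal.rpow_mul]
      congr 1
      field_simp
    rw [h1, e]
    exact ENNReal.rpow_le_rpow (hsum_leq.trans le_rfl) hq1'
  calc ∫⁻ x in s, (‖F (v x) - F (v x - w x)‖₊ : ℝ≥0∞) ∂μ
      = ∫⁻ x, s.indicator (fun x => (‖F (v x) - F (v x - w x)‖₊ : ℝ≥0∞)) x ∂μ := by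
        exact (lintegral_indicator hs _).symm
    _ ≤ ∫⁻ x, ENNReal.ofReal C * (M x * W x + M x ^ (q-1) * W x) ∂μ := lintegral_mono hpt
    _ = ENNReal.ofReal C * ∫⁻ x, (M x * W x + M x ^ (q-1) * W x) ∂μ :=
        lintegral_const_mul' _ _ ENNReal.ofReal_ne_top
    _ = ENNReal.ofReal C * ((∫⁻ x, M x * W x ∂μ) + ∫⁻ x, M x ^ (q-1) * W x ∂μ) := by
        rw [lintegral_add_left' (f := fun x => M x * W x) (hMm.mul hWm)]
    _ ≤ ENNReal.ofReal C *
        ((eLpNorm v 2 μ + eLpNorm w 2 μ) * eLpNorm (s.indicator w) 2 μ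
        + (eLpNorm v P μ + eLpNorm w P μ) ^ (q - 1) * eLpNorm (s.indicator w) P μ) := by
        refine _root_.mul_le_mul_right (add_le_add ?_ ?_) _
        · exact holder1.trans (mul_le_mul' hM2 hW2.le)
        · exact holder2.trans (mul_le_mul' hMq hWq.le)

theorem stmt_12 (N : ℕ) (hN : 5 ≤ N)
    (F : ℝ → ℝ) (hF : ContDiff ℝ 1 F) (hF0 : F 0 = 0)
    (C : ℝ) (hC : 0 < C)
    (hF' : ∀ s : ℝ, |deriv F s| ≤ C * (|s| + |s| ^ (2 * N / ((N : ℝ) - 4) - 1)))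
    (u₀ : EuclideanSpace ℝ (Fin N) → ℝ)
    (hu₀ : MemLp u₀ 2 volume ∧
      MemLp u₀ (ENNReal.ofReal (2 * N / ((N : ℝ) - 4))) volume)
    (u : ℕ → EuclideanSpace ℝ (Fin N) → ℝ)
    (hmeas : ∀ n, Measurable (u n))
    (hb : ⨆ n, (eLpNorm (u n) 2 volume
      + eLpNorm (u n) (ENNReal.ofReal (2 * N / ((N : ℝ) - 4))) volume) < ⊤)
    (hae : ∀ᵐ x, Tendsto (fun n => u n x) atTop (nhds (u₀ x))) :
    Tendsto (fun n => ∫ x, (F (u n x) - F (u n x - u₀ x))) atTop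
      (nhds (∫ x, F (u₀ x))) := by
  obtain ⟨hu₀2, hu₀q⟩ := hu₀
  set q : ℝ := 2 * N / ((N : ℝ) - 4) with hqdef
  have hN5 : (5:ℝ) ≤ (N:ℝ) := by exact_mod_cast hN
  have hq2 : 2 ≤ q := by
    rw [hqdef, le_div_iff₀ (by linarith)]
    linarith
  have hq1' : (0:ℝ) ≤ q - 1 := by linarith
  set P : ℝ≥0∞ := ENNReal.ofReal q with hPdef
  have hP0 : P ≠ 0 := (ENNReal.ofReal_pos.2 (by linarith)).ne'
  have hPt : P ≠ ∞ := ENNReal.ofReal_ne_top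
  have hP1 : 1 ≤ P := ENNReal.one_le_ofReal.2 (by linarith)
  have hu₀m : AEStronglyMeasurable u₀ (volume : Measure (EuclideanSpace ℝ (Fin N))) :=
    hu₀2.aestronglyMeasurable
  set f : ℕ → EuclideanSpace ℝ (Fin N) → ℝ := fun n x => F (u n x) - F (u n x - u₀ x) with hfdef
  set g : EuclideanSpace ℝ (Fin N) → ℝ := fun x => F (u₀ x) with hgdef
  have hFc : Continuous F := hF.continuous
  have hfm : ∀ n, AEStronglyMeasurable (f n) volume := fun n =>
    (hFc.comp_aestronglyMeasurable (hmeas n).aestronglyMeasurable).sub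
      (hFc.comp_aestronglyMeasurable ((hmeas n).aestronglyMeasurable.sub hu₀m))
  have hgm : AEStronglyMeasurable g volume := hFc.comp_aestronglyMeasurable hu₀m
  set S : ℝ≥0∞ := ⨆ n, (eLpNorm (u n) 2 volume + eLpNorm (u n) P volume) with hSdef
  have hSt : S ≠ ∞ := hb.ne
  have hS2 : ∀ n, eLpNorm (u n) 2 volume ≤ S := fun n =>
    le_trans le_self_add (le_iSup (fun n => eLpNorm (u n) 2 volume + eLpNorm (u n) P volume) n)
  have hSq : ∀ n, eLpNorm (u n) P volume ≤ S := fun n =>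
    le_trans le_add_self (le_iSup (fun n => eLpNorm (u n) 2 volume + eLpNorm (u n) P volume) n)
  have hu₀2t : eLpNorm u₀ 2 volume ≠ ∞ := hu₀2.2.ne
  have hu₀qt : eLpNorm u₀ P volume ≠ ∞ := hu₀q.2.ne
  set T : ℝ≥0∞ := S + eLpNorm u₀ 2 volume + eLpNorm u₀ P volume with hTdef
  have hTt : T ≠ ∞ :=
    ENNReal.add_ne_top.2 ⟨ENNReal.add_ne_top.2 ⟨hSt, hu₀2t⟩, hu₀qt⟩
  have hST : S ≤ T := le_trans le_self_add le_self_add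
  have hT2 : ∀ n, eLpNorm (u n) 2 volume ≤ T := fun n => (hS2 n).trans hST
  have hTq : ∀ n, eLpNorm (u n) P volume ≤ T := fun n => (hSq n).trans hST
  have hu₀T2 : eLpNorm u₀ 2 volume ≤ T := le_trans le_add_self le_self_add
  have hu₀Tq : eLpNorm u₀ P volume ≤ T := le_add_self
  set B : ℝ≥0∞ := ENNReal.ofReal C *
      ((T + eLpNorm u₀ 2 volume) + (T + eLpNorm u₀ P volume) ^ (q-1)) + 1 with hBdef
  have hBt : B ≠ ∞ := by
    rw [hBdef]
    refine ENNReal.add_ne_top.2 ⟨ENNReal.mul_ne_top ENNReal.ofReal_ne_top ?_, ENNReal.one_ne_top⟩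
    refine ENNReal.add_ne_top.2 ⟨ENNReal.add_ne_top.2 ⟨hTt, hu₀2t⟩, ?_⟩
    exact ENNReal.rpow_ne_top_of_nonneg hq1' (ENNReal.add_ne_top.2 ⟨hTt, hu₀qt⟩)
  have hB1 : 1 ≤ B := le_add_self
  have hB0 : B ≠ 0 := (zero_lt_one.trans_le hB1).ne'
  -- uniform control on arbitrary sets, for the sequence and the limit
  have hCof1 : ENNReal.ofReal C * (T + eLpNorm u₀ 2 volume) ≤ B :=
    le_trans (_root_.mul_le_mul_right le_self_add _) le_self_add
  have hCof2 : ENNReal.ofReal C * (T + eLpNorm u₀ P volume) ^ (q-1) ≤ B :=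
    le_trans (_root_.mul_le_mul_right le_add_self _) le_self_add
  have hkey : ∀ (v : EuclideanSpace ℝ (Fin N) → ℝ), AEStronglyMeasurable v volume →
      eLpNorm v 2 volume ≤ T → eLpNorm v P volume ≤ T →
      ∀ s : Set (EuclideanSpace ℝ (Fin N)), MeasurableSet s →
      ∫⁻ x in s, (‖F (v x) - F (v x - u₀ x)‖₊ : ℝ≥0∞) ∂volume ≤
        B * (eLpNorm (s.indicator u₀) 2 volume + eLpNorm (s.indicator u₀) P volume) := by
    intro v hvm hv2 hvq s hs
    refine (bl_key hq2 hF hF' hvm hu₀m hs).trans ?_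
    calc ENNReal.ofReal C *
        ((eLpNorm v 2 volume + eLpNorm u₀ 2 volume) * eLpNorm (s.indicator u₀) 2 volume
        + (eLpNorm v P volume + eLpNorm u₀ P volume) ^ (q - 1)
            * eLpNorm (s.indicator u₀) P volume)
        ≤ ENNReal.ofReal C *
        ((T + eLpNorm u₀ 2 volume) * eLpNorm (s.indicator u₀) 2 volume
        + (T + eLpNorm u₀ P volume) ^ (q - 1) * eLpNorm (s.indicator u₀) P volume) := by
          refine _root_.mul_le_mul_right (add_le_add ?_ ?_) _
          · exact _root_.mul_le_mul_left (add_le_add_left hv2 _) _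
          · exact _root_.mul_le_mul_left (ENNReal.rpow_le_rpow (add_le_add_left hvq _) hq1') _
      _ = (ENNReal.ofReal C * (T + eLpNorm u₀ 2 volume)) * eLpNorm (s.indicator u₀) 2 volume
          + (ENNReal.ofReal C * (T + eLpNorm u₀ P volume) ^ (q - 1))
            * eLpNorm (s.indicator u₀) P volume := by
          rw [mul_add, ← mul_assoc, ← mul_assoc]
      _ ≤ B * eLpNorm (s.indicator u₀) 2 volume + B * eLpNorm (s.indicator u₀) P volume :=
          add_le_add (_root_.mul_le_mul_left hCof1 _) (_root_.mul_le_mul_left hCof2 _)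
      _ = B * (eLpNorm (s.indicator u₀) 2 volume + eLpNorm (s.indicator u₀) P volume) := by
          rw [mul_add]
  have hkeyf : ∀ n, ∀ s : Set (EuclideanSpace ℝ (Fin N)), MeasurableSet s →
      ∫⁻ x in s, (‖f n x‖₊ : ℝ≥0∞) ∂volume ≤
        B * (eLpNorm (s.indicator u₀) 2 volume + eLpNorm (s.indicator u₀) P volume) :=
    fun n s hs => hkey (u n) (hmeas n).aestronglyMeasurable (hT2 n) (hTq n) s hs
  have hkeyg : ∀ s : Set (EuclideanSpace ℝ (Fin N)), MeasurableSet s →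
      ∫⁻ x in s, (‖g x‖₊ : ℝ≥0∞) ∂volume ≤
        B * (eLpNorm (s.indicator u₀) 2 volume + eLpNorm (s.indicator u₀) P volume) := by
    intro s hs
    have h := hkey u₀ hu₀m hu₀T2 hu₀Tq s hs
    have he : ∀ x, (‖g x‖₊ : ℝ≥0∞) = (‖F (u₀ x) - F (u₀ x - u₀ x)‖₊ : ℝ≥0∞) := by
      intro x; rw [hgdef]; simp [hF0]
    calc ∫⁻ x in s, (‖g x‖₊ : ℝ≥0∞) ∂volume
        = ∫⁻ x in s, (‖F (u₀ x) - F (u₀ x - u₀ x)‖₊ : ℝ≥0∞) ∂volume :=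
          lintegral_congr fun x => he x
      _ ≤ _ := h
  have hBfin : B * (eLpNorm u₀ 2 volume + eLpNorm u₀ P volume) < ⊤ :=
    ENNReal.mul_lt_top hBt.lt_top (ENNReal.add_lt_top.2 ⟨hu₀2t.lt_top, hu₀qt.lt_top⟩)
  have hfi : ∀ n, Integrable (f n) volume := by
    intro n
    rw [← memLp_one_iff_integrable]
    refine ⟨hfm n, ?_⟩
    rw [eLpNorm_one_eq_lintegral_enorm]
    have h := hkeyf n Set.univ MeasurableSet.univ
    rw [Measure.restrict_univ, Set.indicator_univ] at h
    exact lt_of_le_of_lt h hBfin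
  have hgi : Integrable g volume := by
    rw [← memLp_one_iff_integrable]
    refine ⟨hgm, ?_⟩
    rw [eLpNorm_one_eq_lintegral_enorm]
    have h := hkeyg Set.univ MeasurableSet.univ
    rw [Measure.restrict_univ, Set.indicator_univ] at h
    exact lt_of_le_of_lt h hBfin
  -- arithmetic helper: for any target value t, B * (t/B/2 + t/B/2) = t
  have harith : ∀ t : ℝ≥0∞, t ≠ 0 → t ≠ ∞ → B * (t / B / 2 + t / B / 2) = t := by
    intro t ht0 htt
    have h1 : t / B / 2 + t / B / 2 = t / B := by
      rw [← two_mul, mul_comm, ENNReal.div_mul_cancel two_ne_zero ENNReal.ofNat_ne_top]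
    rw [h1, mul_comm, ENNReal.div_mul_cancel hB0 hBt]
  have hεB0 : ∀ t : ℝ≥0∞, t ≠ 0 → t / B / 2 ≠ 0 := fun t ht0 =>
    (ENNReal.div_pos_iff.2 ⟨(ENNReal.div_pos_iff.2 ⟨ht0, hBt⟩).ne', ENNReal.ofNat_ne_top⟩).ne'
  have hεBt : ∀ t : ℝ≥0∞, t ≠ ∞ → t / B / 2 ≠ ∞ := by
    intro t htt
    rw [div_eq_mul_inv, div_eq_mul_inv]
    exact ENNReal.mul_ne_top (ENNReal.mul_ne_top htt (ENNReal.inv_ne_top.2 hB0))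
      (ENNReal.inv_ne_top.2 two_ne_zero)
  -- Uniform integrability
  have hui : UnifIntegrable f 1 volume := by
    intro ε hε
    set t : ℝ≥0∞ := ENNReal.ofReal ε with htdef
    have ht0 : t ≠ 0 := (ENNReal.ofReal_pos.2 hε).ne'
    set εr : ℝ := (t / B / 2).toReal with hεrdef
    have hεr : 0 < εr := ENNReal.toReal_pos (hεB0 t ht0) (hεBt t ENNReal.ofReal_ne_top)
    have hεreq : ENNReal.ofReal εr = t / B / 2 :=
      ENNReal.ofReal_toReal (hεBt t ENNReal.ofReal_ne_top)
    obtain ⟨δ₁, hδ₁, h₁⟩ := hu₀2.eLpNorm_indicator_le one_le_two ENNReal.ofNat_ne_top hεr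
    obtain ⟨δ₂, hδ₂, h₂⟩ := hu₀q.eLpNorm_indicator_le hP1 hPt hεr
    refine ⟨min δ₁ δ₂, lt_min hδ₁ hδ₂, fun i s hs hμs => ?_⟩
    have hμs₁ : volume s ≤ ENNReal.ofReal δ₁ :=
      hμs.trans (ENNReal.ofReal_le_ofReal (min_le_left _ _))
    have hμs₂ : volume s ≤ ENNReal.ofReal δ₂ :=
      hμs.trans (ENNReal.ofReal_le_ofReal (min_le_right _ _))
    rw [eLpNorm_indicator_eq_eLpNorm_restrict hs, eLpNorm_one_eq_lintegral_enorm]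
    refine le_trans (hkeyf i s hs) ?_
    calc B * (eLpNorm (s.indicator u₀) 2 volume + eLpNorm (s.indicator u₀) P volume)
        ≤ B * (t / B / 2 + t / B / 2) := by
          refine _root_.mul_le_mul_right (add_le_add ?_ ?_) _
          · exact (h₁ s hs hμs₁).trans hεreq.le
          · exact (h₂ s hs hμs₂).trans hεreq.le
      _ = t := harith t ht0 ENNReal.ofReal_ne_top
  -- Uniform tightness
  have hut : UnifTight f 1 volume := by
    intro ε hε
    set t : ℝ≥0∞ := (ε : ℝ≥0∞) with htdef
    have ht0 : t ≠ 0 := ENNReal.coe_ne_zero.2 hε.ne'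
    have htt : t ≠ ∞ := ENNReal.coe_ne_top
    obtain ⟨s₁, hs₁m, hs₁f, h₁⟩ :=
      hu₀2.exists_eLpNorm_indicator_compl_lt ENNReal.ofNat_ne_top (hεB0 t ht0)
    obtain ⟨s₂, hs₂m, hs₂f, h₂⟩ := hu₀q.exists_eLpNorm_indicator_compl_lt hPt (hεB0 t ht0)
    refine ⟨s₁ ∪ s₂, ((measure_union_le _ _).trans_lt
      (ENNReal.add_lt_top.2 ⟨hs₁f, hs₂f⟩)).ne, fun i => ?_⟩
    have hsm : MeasurableSet ((s₁ ∪ s₂)ᶜ) := (hs₁m.union hs₂m).compl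
    have hsub₁ : (s₁ ∪ s₂)ᶜ ⊆ s₁ᶜ := Set.compl_subset_compl.2 Set.subset_union_left
    have hsub₂ : (s₁ ∪ s₂)ᶜ ⊆ s₂ᶜ := Set.compl_subset_compl.2 Set.subset_union_right
    have m2 : eLpNorm ((s₁ ∪ s₂)ᶜ.indicator u₀) 2 volume ≤ eLpNorm (s₁ᶜ.indicator u₀) 2 volume :=
      eLpNorm_mono fun x => norm_indicator_le_of_subset hsub₁ _ _
    have mq : eLpNorm ((s₁ ∪ s₂)ᶜ.indicator u₀) P volume ≤ eLpNorm (s₂ᶜ.indicator u₀) P volume :=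
      eLpNorm_mono fun x => norm_indicator_le_of_subset hsub₂ _ _
    rw [eLpNorm_indicator_eq_eLpNorm_restrict hsm, eLpNorm_one_eq_lintegral_enorm]
    refine le_trans (hkeyf i _ hsm) ?_
    calc B * (eLpNorm ((s₁ ∪ s₂)ᶜ.indicator u₀) 2 volume
          + eLpNorm ((s₁ ∪ s₂)ᶜ.indicator u₀) P volume)
        ≤ B * (t / B / 2 + t / B / 2) :=
          _root_.mul_le_mul_right (add_le_add (m2.trans h₁.le) (mq.trans h₂.le)) _
      _ = t := harith t ht0 htt
  -- a.e. convergence of f n to g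
  have hfg : ∀ᵐ x ∂(volume : Measure (EuclideanSpace ℝ (Fin N))),
      Tendsto (fun n => f n x) atTop (nhds (g x)) := by
    filter_upwards [hae] with x hx
    have h1 : Tendsto (fun n => F (u n x)) atTop (nhds (F (u₀ x))) :=
      (hFc.tendsto _).comp hx
    have h2 : Tendsto (fun n => F (u n x - u₀ x)) atTop (nhds (F (u₀ x - u₀ x))) :=
      (hFc.tendsto _).comp (hx.sub tendsto_const_nhds)
    have h3 := h1.sub h2
    rw [sub_self, hF0, sub_zero] at h3
    exact h3
  -- Vitali convergence theorem
  have hL1 : Tendsto (fun n => eLpNorm (f n - g) 1 volume) atTop (nhds 0) :=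
    tendsto_Lp_of_tendsto_ae le_rfl ENNReal.one_ne_top hfm
      (memLp_one_iff_integrable.2 hgi) hui hut hfg
  have hfs : Tendsto (fun n => ∫⁻ x, (‖f n x - g x‖₊ : ℝ≥0∞) ∂volume) atTop (nhds 0) := by
    refine hL1.congr fun n => ?_
    rw [eLpNorm_one_eq_lintegral_enorm]
    rfl
  exact tendsto_integral_of_L1 g hgi.1 (Eventually.of_forall hfi) hfs
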